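/- A binary vector x ∈ {0,1}^A is the incidence vector of a Morse matching if and only if x satisfies all matching inequalities x(δ(F)) ≤ 1 for every face F, and all cycle inequalities x(C) ≤ |C|/2 − 1 for every undirected cycle C contained in a single level H_i of the Hasse diagram. -/
import Mathlib


open Finset

variable {V : Type*} [DecidableEq V]

/-- A finite abstract simplicial complex on vertex set `V`: a finite family of
nonempty finite subsets closed under taking nonempty subsets. -/
structure SC (V : Type*) [DecidableEq V] where
  faces : Finset (Finset V)
  nonempty_mem : ∀ F ∈ faces, F.Nonempty
  down_closed : ∀ F ∈ faces, ∀ G : Finset V, G.Nonempty → G ⊆ F → G ∈ faces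

/-- Arcs of the Hasse diagram: pairs `(G, F)` with `F ≺ G` (covering relation),
directed from the higher- to the lower-dimensional face. -/
def arcs (Δ : SC V) : Finset (Finset V × Finset V) :=
  (Δ.faces ×ˢ Δ.faces).filter fun p => p.2 ⊆ p.1 ∧ p.2.card + 1 = p.1.card

/-- The set `δ(F)` of arcs incident to the face `F`. -/
def inc (Δ : SC V) (F : Finset V) : Finset (Finset V × Finset V) :=
  (arcs Δ).filter fun a => a.1 = F ∨ a.2 = F

/-- `M` is a matching in the Hasse diagram: a set of arcs such that each face is
incident to at most one arc of `M`. -/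
def IsMatching (Δ : SC V) (M : Finset (Finset V × Finset V)) : Prop :=
  M ⊆ arcs Δ ∧ ∀ a ∈ M, ∀ b ∈ M, a ≠ b →
    a.1 ≠ b.1 ∧ a.1 ≠ b.2 ∧ a.2 ≠ b.1 ∧ a.2 ≠ b.2

/-- The arc relation of the modified Hasse diagram `H(M)`: arcs of `H` with the
arcs of `M` reversed. -/
def HMrel (Δ : SC V) (M : Finset (Finset V × Finset V)) (X Y : Finset V) : Prop :=
  ((X, Y) ∈ arcs Δ ∧ (X, Y) ∉ M) ∨ (Y, X) ∈ M

/-- A simple directed cycle of length `n` in the relation `r`,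
given as an injective cyclic sequence of vertices. -/
def IsDirCycle {α : Type*} (r : α → α → Prop) (n : ℕ) (c : ZMod n → α) : Prop :=
  2 ≤ n ∧ Function.Injective c ∧ ∀ i, r (c i) (c (i + 1))

/-- A Morse matching: a matching `M` such that `H(M)` is acyclic. -/
def IsMorse (Δ : SC V) (M : Finset (Finset V × Finset V)) : Prop :=
  IsMatching Δ M ∧ ∀ (n : ℕ) (c : ZMod n → Finset V), ¬ IsDirCycle (HMrel Δ M) n c

/-- The arc of the Hasse diagram corresponding to an undirected Hasse edge
between the faces `F` and `G` (oriented from the larger to the smaller face). -/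
def edgeArc (F G : Finset V) : Finset V × Finset V :=
  if F.card < G.card then (G, F) else (F, G)

/-- A simple undirected cycle inside the level `H_i` of the Hasse diagram, given
as an injective cyclic sequence of pairwise adjacent faces of dimensions `i`
and `i+1`. -/
def IsLevelCycle (Δ : SC V) (i n : ℕ) (c : ZMod n → Finset V) : Prop :=
  3 ≤ n ∧ Function.Injective c ∧
    (∀ j, (c j, c (j + 1)) ∈ arcs Δ ∨ (c (j + 1), c j) ∈ arcs Δ) ∧
    (∀ j, (c j).card = i + 1 ∨ (c j).card = i + 2)

/-- The value `x(C)` of a cycle: the sum of `x` over the (arcs corresponding to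
the) edges of the cycle. -/
def cycleSum (x : Finset V × Finset V → ℝ) (n : ℕ) (c : ZMod n → Finset V) : ℝ :=
  ∑ j ∈ Finset.range n, x (edgeArc (c (j : ZMod n)) (c ((j : ZMod n) + 1)))

/-! ### Auxiliary lemmas -/

lemma sum_range_zmod {n : ℕ} [NeZero n] (f : ZMod n → ℝ) :
    ∑ j ∈ Finset.range n, f ((j : ℕ) : ZMod n) = ∑ i : ZMod n, f i := by
  refine Finset.sum_nbij' (fun j => ((j : ℕ) : ZMod n)) (fun i => i.val) ?_ ?_ ?_ ?_ ?_
  · intro a _; exact Finset.mem_univ _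
  · intro a _; exact Finset.mem_range.mpr (ZMod.val_lt a)
  · intro a ha; exact ZMod.val_cast_of_lt (Finset.mem_range.mp ha)
  · intro a _; exact ZMod.natCast_rightInverse a
  · intro a _; rfl

lemma zmod_induction {n : ℕ} [NeZero n] (P : ZMod n → Prop)
    (h0 : P 0) (hstep : ∀ j, P j → P (j + 1)) : ∀ j, P j := by
  have key : ∀ k : ℕ, P ((k : ℕ) : ZMod n) := by
    intro k
    induction k with
    | zero => simpa using h0
    | succ k ih => push_cast; exact hstep _ ih
  intro j
  have := key j.val
  rwa [ZMod.natCast_rightInverse j] at this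

lemma zmod_cast_ne_zero {n k : ℕ} [NeZero n] (hk : 0 < k) (hkn : k < n) :
    ((k : ℕ) : ZMod n) ≠ 0 := by
  intro h
  have := ZMod.val_cast_of_lt hkn
  rw [h, ZMod.val_zero] at this
  omega

lemma cyc_ne {n : ℕ} [NeZero n] {α : Type*} {c : ZMod n → α} (hinj : Function.Injective c)
    {k : ℕ} (h0 : 0 < k) (hk : k < n) (j : ZMod n) : c j ≠ c (j + (k : ZMod n)) := by
  intro h
  have h1 := hinj h
  exact zmod_cast_ne_zero h0 hk (left_eq_add.mp h1)

lemma cyclic_indep {n : ℕ} [NeZero n] (S : Finset (ZMod n))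
    (h : ∀ j ∈ S, j + 1 ∉ S) :
    2 * S.card ≤ n ∧ (n ≤ 2 * S.card → ∀ j, j ∉ S → j - 1 ∈ S) := by
  classical
  set T : Finset (ZMod n) := S.image (· + 1) with hT
  have hinj : Function.Injective (· + 1 : ZMod n → ZMod n) := fun a b hab => by
    simpa using hab
  have hcardT : T.card = S.card := Finset.card_image_of_injective _ hinj
  have hsub : T ⊆ Sᶜ := by
    intro t ht
    simp only [hT, Finset.mem_image] at ht
    obtain ⟨s, hs, rfl⟩ := ht
    simpa using h s hs
  have hle : T.card ≤ Sᶜ.card := Finset.card_le_card hsub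
  have hcompl : Sᶜ.card = n - S.card := by
    rw [Finset.card_compl, ZMod.card]
  have hSn : S.card ≤ n := by
    have := Finset.card_le_univ S
    rwa [ZMod.card] at this
  constructor
  · omega
  · intro heq j hj
    have hTeq : T = Sᶜ := Finset.eq_of_subset_of_card_le hsub (by omega)
    have : j ∈ T := by rw [hTeq]; simpa using hj
    simp only [hT, Finset.mem_image] at this
    obtain ⟨s, hs, rfl⟩ := this
    simpa using hs

lemma mem_arcs_iff {Δ : SC V} {a : Finset V × Finset V} :
    a ∈ arcs Δ ↔ a.1 ∈ Δ.faces ∧ a.2 ∈ Δ.faces ∧ a.2 ⊆ a.1 ∧ a.2.card + 1 = a.1.card := by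
  simp only [arcs, Finset.mem_filter, Finset.mem_product]
  tauto

lemma arcs_card' {Δ : SC V} {F G : Finset V} (h : (F, G) ∈ arcs Δ) :
    G.card + 1 = F.card :=
  (mem_arcs_iff.mp h).2.2.2

lemma edgeArc_eq_left {F G : Finset V} (h : G.card < F.card) : edgeArc F G = (F, G) := by
  rw [edgeArc, if_neg (by omega)]

lemma edgeArc_eq_right {F G : Finset V} (h : F.card < G.card) : edgeArc F G = (G, F) := by
  rw [edgeArc, if_pos h]

/-- A 0/1 vector `x` on the arcs of the Hasse diagram is the
incidence vector of a Morse matching iff it satisfies all matching inequalities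
`x(δ(F)) ≤ 1` and all cycle inequalities `x(C) ≤ |C|/2 - 1` for undirected
cycles `C` within a level. -/
theorem incidence_vector_iff_matching_and_cycle_ineqs (Δ : SC V)
    (x : Finset V × Finset V → ℝ) (h01 : ∀ a ∈ arcs Δ, x a = 0 ∨ x a = 1) :
    (∃ M, IsMorse Δ M ∧ ∀ a ∈ arcs Δ, x a = if a ∈ M then 1 else 0) ↔
      ((∀ F ∈ Δ.faces, ∑ a ∈ inc Δ F, x a ≤ 1) ∧
        ∀ (i n : ℕ) (c : ZMod n → Finset V), IsLevelCycle Δ i n c →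
          cycleSum x n c ≤ (n : ℝ) / 2 - 1) := by
  classical
  constructor
  · -- Forward direction
    rintro ⟨M, ⟨hmatch, hacyc⟩, hx⟩
    have hMarcs := hmatch.1
    constructor
    · -- matching inequalities
      intro F hF
      have hxi : ∀ a ∈ inc Δ F, x a = if a ∈ M then (1 : ℝ) else 0 := fun a ha =>
        hx a (Finset.mem_of_mem_filter a ha)
      rw [Finset.sum_congr rfl hxi, Finset.sum_boole]
      have hcard : ((inc Δ F).filter (fun a => a ∈ M)).card ≤ 1 := by
        rw [Finset.card_le_one]
        intro a ha b hb
        by_contra hne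
        simp only [inc, Finset.mem_filter] at ha hb
        obtain ⟨⟨haA, hainc⟩, haM⟩ := ha
        obtain ⟨⟨hbA, hbinc⟩, hbM⟩ := hb
        have h4 := hmatch.2 a haM b hbM hne
        rcases hainc with h1 | h1 <;> rcases hbinc with h2 | h2
        · exact h4.1 (h1.trans h2.symm)
        · exact h4.2.1 (h1.trans h2.symm)
        · exact h4.2.2.1 (h1.trans h2.symm)
        · exact h4.2.2.2 (h1.trans h2.symm)
      exact_mod_cast hcard
    · -- cycle inequalities
      intro i n c hc
      obtain ⟨hn3, hinj, harc, hcards⟩ := hc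
      haveI : NeZero n := ⟨by omega⟩
      have hcne1 : ∀ j : ZMod n, c j ≠ c (j + 1) := by
        intro j
        have := cyc_ne hinj (k := 1) one_pos (by omega) j
        simpa using this
      have hcne2 : ∀ j : ZMod n, c j ≠ c (j + 1 + 1) := by
        intro j
        have h := cyc_ne hinj (k := 2) two_pos (by omega) j
        have h2 : ((2 : ℕ) : ZMod n) = 1 + 1 := by push_cast; ring
        rw [h2, ← add_assoc] at h
        exact h
      have hstep : ∀ j : ZMod n,
          ((c j).card = i + 1 ∧ (c (j + 1)).card = i + 2 ∧ (c (j + 1), c j) ∈ arcs Δ) ∨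
          ((c j).card = i + 2 ∧ (c (j + 1)).card = i + 1 ∧ (c j, c (j + 1)) ∈ arcs Δ) := by
        intro j
        have h1 := hcards j
        have h2 := hcards (j + 1)
        rcases harc j with h | h
        · have hcc := arcs_card' h
          exact Or.inr ⟨by omega, by omega, h⟩
        · have hcc := arcs_card' h
          exact Or.inl ⟨by omega, by omega, h⟩
      set S : Finset (ZMod n) := univ.filter (fun j => edgeArc (c j) (c (j + 1)) ∈ M) with hS
      have hmemS : ∀ j : ZMod n, j ∈ S ↔ edgeArc (c j) (c (j + 1)) ∈ M := fun j => by
        simp [hS]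
      have hedge : ∀ j : ZMod n, edgeArc (c j) (c (j + 1)) ∈ arcs Δ ∧
          (edgeArc (c j) (c (j + 1)) = (c j, c (j + 1)) ∨
            edgeArc (c j) (c (j + 1)) = (c (j + 1), c j)) := by
        intro j
        rcases hstep j with ⟨h1, h2, h3⟩ | ⟨h1, h2, h3⟩
        · rw [edgeArc_eq_right (by omega)]; exact ⟨h3, Or.inr rfl⟩
        · rw [edgeArc_eq_left (by omega)]; exact ⟨h3, Or.inl rfl⟩
      have hSadj : ∀ j ∈ S, j + 1 ∉ S := by
        intro j hj hj1
        rw [hmemS] at hj hj1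
        have hne : edgeArc (c j) (c (j + 1)) ≠ edgeArc (c (j + 1)) (c (j + 1 + 1)) := by
          intro hEq
          rcases (hedge j).2 with h | h <;> rcases (hedge (j + 1)).2 with h' | h' <;>
            rw [h, h'] at hEq
          · exact hcne1 j (congrArg Prod.fst hEq)
          · exact hcne2 j (congrArg Prod.fst hEq)
          · exact hcne2 j (congrArg Prod.snd hEq)
          · exact hcne1 (j + 1) (congrArg Prod.fst hEq)
        have h4 := hmatch.2 _ hj _ hj1 hne
        rcases (hedge j).2 with h | h <;> rcases (hedge (j + 1)).2 with h' | h'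
        · exact h4.2.2.1 (by rw [h, h'])
        · exact h4.2.2.2 (by rw [h, h'])
        · exact h4.1 (by rw [h, h'])
        · exact h4.2.1 (by rw [h, h'])
      obtain ⟨hSle, hSeq⟩ := cyclic_indep S hSadj
      have halt : ∀ j : ZMod n, ((c j).card = i + 1) ↔ ¬((c (j + 1)).card = i + 1) := by
        intro j
        rcases hstep j with ⟨h1, h2, -⟩ | ⟨h1, h2, -⟩ <;> constructor <;> intro <;> omega
      have hEven : Even n := by
        have key : ∀ k : ℕ,
            ((c ((k : ℕ) : ZMod n)).card = i + 1 ↔ (Even k ↔ (c 0).card = i + 1)) := by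
          intro k
          induction k with
          | zero => simp only [Nat.cast_zero, Even.zero]; tauto
          | succ k ih =>
            push_cast
            have h1 := halt ((k : ℕ) : ZMod n)
            rw [Nat.even_add_one]
            tauto
        have hk := key n
        rw [ZMod.natCast_self] at hk
        by_contra hodd
        tauto
      have hSne : ¬(n ≤ 2 * S.card) := by
        intro hfull
        have hconv := hSeq hfull
        have hiffS : ∀ j : ZMod n, j ∈ S ↔ j + 1 ∉ S := by
          intro j
          refine ⟨hSadj j, fun hj1 => ?_⟩
          have := hconv (j + 1) hj1
          simpa using this
        have hPstep : ∀ j : ZMod n,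
            ((j ∈ S ↔ (c j).card = i + 1) ↔ ((j + 1) ∈ S ↔ (c (j + 1)).card = i + 1)) := by
          intro j
          have h1 := hiffS j
          have h1' := hiffS (j + 1)
          have h2 := halt j
          tauto
        by_cases hP0 : ((0 : ZMod n) ∈ S ↔ (c 0).card = i + 1)
        · have hall : ∀ j : ZMod n, (j ∈ S ↔ (c j).card = i + 1) :=
            zmod_induction _ hP0 (fun j hj => (hPstep j).mp hj)
          refine hacyc n c ⟨by omega, hinj, ?_⟩
          intro j
          by_cases hsm : (c j).card = i + 1
          · have hjS := (hall j).mpr hsm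
            rw [hmemS] at hjS
            rcases hstep j with ⟨h1, h2, h3⟩ | ⟨h1, h2, -⟩
            · rw [edgeArc_eq_right (by omega)] at hjS
              exact Or.inr hjS
            · omega
          · have hjS : edgeArc (c j) (c (j + 1)) ∉ M :=
              fun h => hsm ((hall j).mp ((hmemS j).mpr h))
            rcases hstep j with ⟨h1, h2, -⟩ | ⟨h1, h2, h3⟩
            · omega
            · rw [edgeArc_eq_left (by omega)] at hjS
              exact Or.inl ⟨h3, hjS⟩
        · have hall : ∀ j : ZMod n, ¬(j ∈ S ↔ (c j).card = i + 1) :=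
            zmod_induction _ hP0 (fun j hj h1 => hj ((hPstep j).mpr h1))
          have hall' : ∀ j : ZMod n, (j ∈ S ↔ ¬((c j).card = i + 1)) := by
            intro j
            have := hall j
            tauto
          refine hacyc n (fun j => c (-j)) ⟨by omega,
            fun a b hab => neg_injective (hinj hab), ?_⟩
          intro j
          show HMrel Δ M (c (-j)) (c (-(j + 1)))
          have hmeq : -(j + 1) + 1 = -j := by ring
          rw [← hmeq]
          generalize -(j + 1) = m
          by_cases hsm : (c m).card = i + 1
          · have hmS : m ∉ S := fun h => ((hall' m).mp h) hsm
            have hmM : edgeArc (c m) (c (m + 1)) ∉ M := fun h => hmS ((hmemS m).mpr h)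
            rcases hstep m with ⟨h1, h2, h3⟩ | ⟨h1, h2, -⟩
            · rw [edgeArc_eq_right (by omega)] at hmM
              exact Or.inl ⟨h3, hmM⟩
            · omega
          · have hmS : m ∈ S := (hall' m).mpr hsm
            rw [hmemS] at hmS
            rcases hstep m with ⟨h1, h2, -⟩ | ⟨h1, h2, h3⟩
            · omega
            · rw [edgeArc_eq_left (by omega)] at hmS
              exact Or.inr hmS
      have hcount : 2 * S.card + 2 ≤ n := by
        obtain ⟨t, ht⟩ := hEven
        omega
      have hterm : ∀ j : ZMod n, x (edgeArc (c j) (c (j + 1))) =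
          if edgeArc (c j) (c (j + 1)) ∈ M then (1 : ℝ) else 0 := fun j =>
        hx _ (hedge j).1
      have hsum : cycleSum x n c = (S.card : ℝ) := by
        rw [cycleSum, sum_range_zmod (fun jz => x (edgeArc (c jz) (c (jz + 1)))),
          Finset.sum_congr rfl (fun j _ => hterm j), Finset.sum_boole]
      rw [hsum]
      have hcast : (2 * S.card + 2 : ℝ) ≤ (n : ℝ) := by exact_mod_cast hcount
      push_cast at hcast
      linarith
  · -- Backward direction
    rintro ⟨hmineq, hcineq⟩
    set M := (arcs Δ).filter (fun a => x a = 1) with hM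
    have hMsub : M ⊆ arcs Δ := Finset.filter_subset _ _
    have hxM : ∀ a ∈ M, x a = 1 := fun a ha => (Finset.mem_filter.mp ha).2
    have hxnM : ∀ a ∈ arcs Δ, a ∉ M → x a = 0 := by
      intro a ha hna
      rcases h01 a ha with h | h
      · exact h
      · exact absurd (Finset.mem_filter.mpr ⟨ha, h⟩) hna
    have hkey : ∀ F : Finset V, F ∈ Δ.faces → ∀ a ∈ M, ∀ b ∈ M, a ≠ b →
        (a.1 = F ∨ a.2 = F) → (b.1 = F ∨ b.2 = F) → False := by
      intro F hF a ha b hb hne hA hB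
      have hsum := hmineq F hF
      have haI : a ∈ inc Δ F := Finset.mem_filter.mpr ⟨hMsub ha, hA⟩
      have hbI : b ∈ inc Δ F := Finset.mem_filter.mpr ⟨hMsub hb, hB⟩
      have hpair : ({a, b} : Finset (Finset V × Finset V)) ⊆ inc Δ F := by
        intro t ht
        rcases Finset.mem_insert.mp ht with rfl | ht
        · exact haI
        · rw [Finset.mem_singleton.mp ht]
          exact hbI
      have hnn : ∀ t ∈ inc Δ F, t ∉ ({a, b} : Finset (Finset V × Finset V)) → 0 ≤ x t := by
        intro t htI _
        have htarcs : t ∈ arcs Δ := Finset.mem_of_mem_filter t htI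
        rcases h01 t htarcs with h | h <;> rw [h] <;> norm_num
      have hmono := Finset.sum_le_sum_of_subset_of_nonneg (f := x) hpair hnn
      rw [Finset.sum_pair hne, hxM a ha, hxM b hb] at hmono
      linarith
    have hmatching : IsMatching Δ M := by
      refine ⟨hMsub, fun a ha b hb hne => ?_⟩
      have ha1 : a.1 ∈ Δ.faces := (mem_arcs_iff.mp (hMsub ha)).1
      have ha2 : a.2 ∈ Δ.faces := (mem_arcs_iff.mp (hMsub ha)).2.1
      refine ⟨?_, ?_, ?_, ?_⟩
      · exact fun h => hkey a.1 ha1 a ha b hb hne (Or.inl rfl) (Or.inl h.symm)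
      · exact fun h => hkey a.1 ha1 a ha b hb hne (Or.inl rfl) (Or.inr h.symm)
      · exact fun h => hkey a.2 ha2 a ha b hb hne (Or.inr rfl) (Or.inl h.symm)
      · exact fun h => hkey a.2 ha2 a ha b hb hne (Or.inr rfl) (Or.inr h.symm)
    refine ⟨M, ⟨hmatching, ?_⟩, ?_⟩
    · -- acyclicity
      intro n c hcyc
      obtain ⟨hn2, hinj, hstepc⟩ := hcyc
      haveI : NeZero n := ⟨by omega⟩
      have hud : ∀ j : ZMod n, ((c (j + 1), c j) ∈ M) ∨
          ((c j, c (j + 1)) ∈ arcs Δ ∧ (c j, c (j + 1)) ∉ M) := by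
        intro j
        rcases hstepc j with h | h
        · exact Or.inr h
        · exact Or.inl h
      have hUcard : ∀ j : ZMod n, (c (j + 1), c j) ∈ M →
          (c j).card + 1 = (c (j + 1)).card := fun j h => arcs_card' (hMsub h)
      have hDcard : ∀ j : ZMod n, (c j, c (j + 1)) ∈ arcs Δ →
          (c (j + 1)).card + 1 = (c j).card := fun j h => arcs_card' h
      set U : Finset (ZMod n) := univ.filter (fun j => (c (j + 1), c j) ∈ M) with hU
      have hmemU : ∀ j : ZMod n, j ∈ U ↔ (c (j + 1), c j) ∈ M := fun j => by simp [hU]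
      have hnU : ∀ j : ZMod n, j ∉ U →
          ((c j, c (j + 1)) ∈ arcs Δ ∧ (c j, c (j + 1)) ∉ M) := by
        intro j hj
        rcases hud j with h | h
        · exact absurd ((hmemU j).mpr h) hj
        · exact h
      have hterm : ∀ j : ZMod n, ((c (j + 1)).card : ℤ) - (c j).card =
          if (c (j + 1), c j) ∈ M then 1 else -1 := by
        intro j
        by_cases h : (c (j + 1), c j) ∈ M
        · rw [if_pos h]
          have := hUcard j h
          omega
        · rw [if_neg h]
          have := hDcard j (hnU j (fun hh => h ((hmemU j).mp hh))).1
          omega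
      have hsum0 : ∑ j : ZMod n, (((c (j + 1)).card : ℤ) - (c j).card) = 0 := by
        rw [Finset.sum_sub_distrib]
        rw [Fintype.sum_equiv (Equiv.addRight (1 : ZMod n))
          (fun j => ((c (j + 1)).card : ℤ)) (fun j => ((c j).card : ℤ)) (fun j => rfl)]
        exact sub_self _
      rw [Finset.sum_congr rfl (fun j _ => hterm j), Finset.sum_ite,
        Finset.sum_const, Finset.sum_const] at hsum0
      have hsplit := Finset.card_filter_add_card_filter_not
        (s := (univ : Finset (ZMod n))) (fun j => (c (j + 1), c j) ∈ M)
      have huniv : (univ : Finset (ZMod n)).card = n := by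
        rw [Finset.card_univ, ZMod.card]
      simp only [nsmul_eq_mul, mul_one, mul_neg] at hsum0
      have hUn : 2 * U.card = n := by
        rw [hU]
        omega
      have hone : (1 : ZMod n) ≠ 0 := by
        have := zmod_cast_ne_zero (n := n) (k := 1) one_pos (by omega)
        simpa using this
      have hcne1 : ∀ j : ZMod n, c j ≠ c (j + 1) := by
        intro j
        have := cyc_ne hinj (k := 1) one_pos (by omega) j
        simpa using this
      have hnoUU : ∀ j : ZMod n, (c (j + 1), c j) ∈ M → (c (j + 1 + 1), c (j + 1)) ∈ M →
          False := by
        intro j h1 h2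
        have hne : ((c (j + 1), c j) : Finset V × Finset V) ≠ (c (j + 1 + 1), c (j + 1)) := by
          intro h
          exact hcne1 j (congrArg Prod.snd h)
        have h4 := hmatching.2 _ h1 _ h2 hne
        exact h4.2.1 rfl
      have hUadj : ∀ j ∈ U, j + 1 ∉ U := by
        intro j hj hj1
        exact hnoUU j ((hmemU j).mp hj) ((hmemU (j + 1)).mp hj1)
      obtain ⟨-, hUeq⟩ := cyclic_indep U hUadj
      have hfull := hUeq (by omega)
      have hDU : ∀ j : ZMod n, j + 1 ∉ U → j ∈ U := by
        intro j hj
        have := hfull (j + 1) hj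
        simpa using this
      have hn2' : n ≠ 2 := by
        intro h
        subst h
        have e1 : (0 : ZMod 2) + 1 = 1 := by decide
        have e2 : (1 : ZMod 2) + 1 = 0 := by decide
        have hne10 : c 0 ≠ c 1 := by
          have := hcne1 0
          rwa [e1] at this
        rcases hud 0 with h0 | h0 <;> rcases hud 1 with h1 | h1 <;>
          rw [e1] at h0 <;> rw [e2] at h1
        · have hne : ((c 1, c 0) : Finset V × Finset V) ≠ (c 0, c 1) := by
            intro h
            exact hne10 (by simpa using congrArg Prod.snd h)
          exact (hmatching.2 _ h0 _ h1 hne).2.1 rfl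
        · exact h1.2 h0
        · exact h0.2 h1
        · have ha := arcs_card' h0.1
          have hb := arcs_card' h1.1
          omega
      have halt2 : ∀ j : ZMod n, (c (j + 1 + 1)).card = (c j).card := by
        intro j
        by_cases hj : j ∈ U
        · have hj1 : j + 1 ∉ U := hUadj j hj
          have h1 := hUcard j ((hmemU j).mp hj)
          have h2 := hDcard (j + 1) (hnU (j + 1) hj1).1
          omega
        · have hj1 : j + 1 ∈ U := by
            by_contra hj1
            exact hj (hDU j hj1)
          have h1 := hDcard j (hnU j hj).1
          have h2 := hUcard (j + 1) ((hmemU (j + 1)).mp hj1)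
          omega
      have hbj : ∀ j : ZMod n, (c j).card = (c 0).card ∨ (c j).card = (c 1).card := by
        intro j
        refine (zmod_induction (fun j => ((c j).card = (c 0).card ∨ (c j).card = (c 1).card) ∧
          ((c (j + 1)).card = (c 0).card ∨ (c (j + 1)).card = (c 1).card))
          ⟨Or.inl rfl, Or.inr (by rw [zero_add])⟩ ?_ j).1
        intro j hjP
        refine ⟨hjP.2, ?_⟩
        rw [halt2 j]
        exact hjP.1
      have hb01 : (c 1).card = (c 0).card + 1 ∨ (c 0).card = (c 1).card + 1 := by
        rcases hud 0 with h | h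
        · have := hUcard 0 h
          rw [zero_add] at this
          omega
        · have := hDcard 0 h.1
          rw [zero_add] at this
          omega
      have hpos : ∀ j : ZMod n, 1 ≤ (c j).card := by
        intro j
        have hf : c j ∈ Δ.faces := by
          rcases hud j with h | h
          · exact (mem_arcs_iff.mp (hMsub h)).2.1
          · exact (mem_arcs_iff.mp h.1).1
        exact Finset.card_pos.mpr (Δ.nonempty_mem _ hf)
      have hcards : ∀ j : ZMod n,
          (c j).card = min (c 0).card (c 1).card - 1 + 1 ∨
          (c j).card = min (c 0).card (c 1).card - 1 + 2 := by
        intro j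
        have h1 := hbj j
        have h2 := hpos 0
        have h3 := hpos 1
        rcases hb01 with h | h
        · rw [min_eq_left (by omega)]
          omega
        · rw [min_eq_right (by omega)]
          omega
      have hlevel : IsLevelCycle Δ (min (c 0).card (c 1).card - 1) n c := by
        refine ⟨by omega, hinj, ?_, hcards⟩
        intro j
        rcases hud j with h | h
        · exact Or.inr (hMsub h)
        · exact Or.inl h.1
      have hineq := hcineq _ n c hlevel
      have hterm2 : ∀ j : ZMod n, x (edgeArc (c j) (c (j + 1))) =
          if (c (j + 1), c j) ∈ M then (1 : ℝ) else 0 := by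
        intro j
        by_cases hj : (c (j + 1), c j) ∈ M
        · have hcc := hUcard j hj
          rw [edgeArc_eq_right (by omega), if_pos hj]
          exact hxM _ hj
        · rw [if_neg hj]
          have hD := hnU j (fun h => hj ((hmemU j).mp h))
          have hcc := hDcard j hD.1
          rw [edgeArc_eq_left (by omega)]
          exact hxnM _ hD.1 hD.2
      have hsum : cycleSum x n c = (U.card : ℝ) := by
        rw [cycleSum, sum_range_zmod (fun jz => x (edgeArc (c jz) (c (jz + 1)))),
          Finset.sum_congr rfl (fun j _ => hterm2 j), Finset.sum_boole]
      rw [hsum] at hineq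
      have hcast : (2 * U.card : ℝ) = (n : ℝ) := by exact_mod_cast hUn
      push_cast at hcast
      linarith
    · -- x is the incidence vector
      intro a ha
      by_cases h : a ∈ M
      · rw [if_pos h, hxM a h]
      · rw [if_neg h, hxnM a ha h]
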